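/- arXiv:2103.16845 — 4 statements merged into one kernel-verified Lean document; each statement's English description precedes it below -/
import Mathlib

section
/- With C_{n,s,p} = sp·2^{2s-1}Γ((n+sp)/2) / (2π^{(n-1)/2}Γ(1-s)Γ((p+1)/2)) and Θ_{m,n,p} = H^{m-1}(S^{m-1})∫₀^∞ t^{m-1}/(1+t²)^{(n+sp)/2} dt, one has C_{n,s,p} · Θ_{m,n,p} = C_{n-m,s,p} for all integers 1 ≤ m < n, 0 < s < 1, 1 ≤ p < ∞. -/
open MeasureTheory Real Set

/-- The normalizing constant `C_{k,s,p}` of the fractional `p`-Laplacian. -/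
noncomputable def fracConst (k : ℕ) (s p : ℝ) : ℝ :=
  s * p * 2 ^ (2 * s - 1) * Real.Gamma (((k : ℝ) + s * p) / 2) /
    (2 * Real.pi ^ (((k : ℝ) - 1) / 2) * Real.Gamma (1 - s) * Real.Gamma ((p + 1) / 2))

/-- `Θ_{m,n,p} = H^{m-1}(S^{m-1}) ∫₀^∞ t^{m-1}/(1+t²)^{(n+sp)/2} dt`,
with `H^{m-1}(S^{m-1}) = 2π^{m/2}/Γ(m/2)`. -/
noncomputable def Theta (m n : ℕ) (s p : ℝ) : ℝ :=
  (2 * Real.pi ^ ((m : ℝ) / 2) / Real.Gamma ((m : ℝ) / 2)) *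
    ∫ t in Set.Ioi (0:ℝ), t ^ ((m : ℝ) - 1) / (1 + t ^ 2) ^ (((n : ℝ) + s * p) / 2)

/-- Real Beta integral in terms of Gamma. -/
lemma betaReal_aux {x y : ℝ} (hx : 0 < x) (hy : 0 < y) :
    Real.Gamma x * Real.Gamma y =
      Real.Gamma (x + y) * ∫ v in (0:ℝ)..1, v ^ (x - 1) * (1 - v) ^ (y - 1) := by
  have h := Complex.Gamma_mul_Gamma_eq_betaIntegral (s := (x:ℂ)) (t := (y:ℂ))
    (by simpa using hx) (by simpa using hy)
  rw [Complex.betaIntegral] at h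
  have hint : (∫ v in (0:ℝ)..1, (v:ℂ) ^ ((x:ℂ) - 1) * ((1:ℂ) - v) ^ ((y:ℂ) - 1))
      = ((∫ v in (0:ℝ)..1, v ^ (x - 1) * (1 - v) ^ (y - 1) : ℝ) : ℂ) := by
    rw [← intervalIntegral.integral_ofReal]
    apply intervalIntegral.integral_congr
    intro v hv
    rw [uIcc_of_le zero_le_one] at hv
    have h1 : (0:ℝ) ≤ v := hv.1
    have h2 : (0:ℝ) ≤ 1 - v := by linarith [hv.2]
    push_cast
    rw [Complex.ofReal_cpow h1, Complex.ofReal_cpow h2]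
    push_cast
    ring
  rw [hint, ← Complex.ofReal_add, Complex.Gamma_ofReal, Complex.Gamma_ofReal,
    Complex.Gamma_ofReal] at h
  exact_mod_cast h

/-- Beta integral over `Ioi 0`. -/
lemma betaIoi_aux {x y : ℝ} (hx : 0 < x) (hy : 0 < y) :
    ∫ u in Ioi (0:ℝ), u ^ (x - 1) * (1 + u) ^ (-(x + y)) =
      Real.Gamma x * Real.Gamma y / Real.Gamma (x + y) := by
  set g : ℝ → ℝ := fun u => u ^ (x - 1) * (1 + u) ^ (-(x + y)) with hg
  have himg : (fun v : ℝ => v / (1 - v)) '' Ioo 0 1 = Ioi 0 := by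
    ext u
    constructor
    · rintro ⟨v, ⟨hv0, hv1⟩, rfl⟩
      exact div_pos hv0 (by linarith)
    · intro hu
      simp only [mem_Ioi] at hu
      have h1u : (1:ℝ) + u ≠ 0 := by positivity
      refine ⟨u / (1 + u), ⟨div_pos hu (by linarith), by rw [div_lt_one (by linarith)]; linarith⟩, ?_⟩
      field_simp
      ring
  have hderiv : ∀ v ∈ Ioo (0:ℝ) 1, HasDerivWithinAt (fun v : ℝ => v / (1 - v))
      (((1 - v) ^ 2)⁻¹) (Ioo 0 1) v := by
    intro v hv
    have h1 : (1:ℝ) - v ≠ 0 := (by linarith [hv.2] : (0:ℝ) < 1 - v).ne'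
    have hd := (hasDerivAt_id v).div ((hasDerivAt_const v (1:ℝ)).sub (hasDerivAt_id v)) h1
    have heq : (1 * (1 - v) - v * (0 - 1)) / (1 - v) ^ 2 = ((1 - v) ^ 2)⁻¹ := by
      field_simp
      ring
    simp only [id_eq, Pi.sub_apply] at hd
    rw [heq] at hd
    exact hd.hasDerivWithinAt
  have hinj : InjOn (fun v : ℝ => v / (1 - v)) (Ioo 0 1) := by
    intro a ha b hb hab
    have h1 : (0:ℝ) < 1 - a := by linarith [ha.2]
    have h2 : (0:ℝ) < 1 - b := by linarith [hb.2]
    simp only at hab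
    field_simp [h1.ne', h2.ne'] at hab
    nlinarith [hab]
  have key := integral_image_eq_integral_abs_deriv_smul measurableSet_Ioo hderiv hinj g
  rw [himg] at key
  have hpt : ∀ v ∈ Ioo (0:ℝ) 1,
      |((1 - v) ^ 2)⁻¹| • g (v / (1 - v)) = v ^ (x - 1) * (1 - v) ^ (y - 1) := by
    intro v hv
    have hv0 : (0:ℝ) < v := hv.1
    have hw : (0:ℝ) < 1 - v := by linarith [hv.2]
    have h1 : 1 + v / (1 - v) = (1 - v)⁻¹ := by
      field_simp
      ring
    have habs : |((1 - v) ^ 2)⁻¹| = (1 - v) ^ (-2 : ℝ) := by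
      rw [abs_of_pos (by positivity), ← Real.rpow_natCast (1 - v) 2, ← Real.rpow_neg hw.le]
      norm_num
    calc |((1 - v) ^ 2)⁻¹| • g (v / (1 - v))
        = (1-v) ^ (-2:ℝ) * ((v ^ (x-1) * (1-v) ^ (-(x-1))) * (1-v) ^ (x+y)) := by
          rw [smul_eq_mul, habs, hg]
          simp only [h1]
          rw [Real.div_rpow hv0.le hw.le, Real.inv_rpow hw.le, ← Real.rpow_neg hw.le, neg_neg,
            Real.rpow_neg hw.le (x-1), div_eq_mul_inv]
      _ = v ^ (x-1) * ((1-v) ^ (-2:ℝ) * ((1-v) ^ (-(x-1)) * (1-v) ^ (x+y))) := by ring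
      _ = v ^ (x-1) * (1-v) ^ (y-1) := by
          rw [← Real.rpow_add hw, ← Real.rpow_add hw,
            show (-2:ℝ) + (-(x-1)+(x+y)) = y - 1 by ring]
  rw [key, setIntegral_congr_fun measurableSet_Ioo hpt,
    ← MeasureTheory.integral_Ioc_eq_integral_Ioo,
    ← intervalIntegral.integral_of_le zero_le_one]
  have hG : Real.Gamma (x + y) ≠ 0 := (Real.Gamma_pos_of_pos (by linarith)).ne'
  rw [eq_div_iff hG, mul_comm, ← betaReal_aux hx hy]

lemma intIoi_aux (m : ℕ) (hm : 1 ≤ m) {a : ℝ} (ha : (m:ℝ) < a) :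
    ∫ t in Ioi (0:ℝ), t ^ ((m:ℝ) - 1) / (1 + t ^ 2) ^ (a / 2)
      = Real.Gamma ((m:ℝ)/2) * Real.Gamma ((a - m)/2) / (2 * Real.Gamma (a/2)) := by
  have hm0 : (0:ℝ) < (m:ℝ) := by exact_mod_cast hm
  have hx : 0 < (m:ℝ)/2 := by positivity
  have hy : 0 < (a - (m:ℝ))/2 := by linarith
  have key := MeasureTheory.integral_comp_rpow_Ioi
    (fun u => u ^ ((m:ℝ)/2 - 1) * (1 + u) ^ (-(((m:ℝ)/2) + (a - (m:ℝ))/2))) (p := (2:ℝ))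
    two_ne_zero
  have hpt : ∀ t ∈ Ioi (0:ℝ), (|(2:ℝ)| * t ^ ((2:ℝ) - 1)) •
      ((t ^ (2:ℝ)) ^ ((m:ℝ)/2 - 1) * (1 + t ^ (2:ℝ)) ^ (-(((m:ℝ)/2) + (a - (m:ℝ))/2)))
      = 2 * (t ^ ((m:ℝ) - 1) / (1 + t ^ 2) ^ (a / 2)) := by
    intro t ht
    have ht0 : (0:ℝ) < t := ht
    have hb : (0:ℝ) < 1 + t ^ 2 := by positivity
    have h2r : t ^ (2:ℝ) = t ^ 2 := by
      rw [← Real.rpow_natCast t 2]; norm_num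
    have hpow : (t ^ (2:ℝ)) ^ ((m:ℝ)/2 - 1) = t ^ ((m:ℝ) - 2) := by
      rw [← Real.rpow_mul ht0.le, show (2:ℝ) * ((m:ℝ)/2 - 1) = (m:ℝ) - 2 by ring]
    rw [smul_eq_mul, hpow, h2r,
      show -(((m:ℝ)/2) + (a - (m:ℝ))/2) = -(a/2) by ring,
      Real.rpow_neg hb.le, abs_of_pos (by norm_num : (0:ℝ) < 2),
      show (2:ℝ) - 1 = 1 by norm_num, Real.rpow_one, div_eq_mul_inv]
    have : t * t ^ ((m:ℝ) - 2) = t ^ ((m:ℝ) - 1) := by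
      rw [show (m:ℝ) - 1 = 1 + ((m:ℝ) - 2) by ring, Real.rpow_add ht0, Real.rpow_one]
    calc 2 * t * (t ^ ((m:ℝ) - 2) * ((1 + t ^ 2) ^ (a/2))⁻¹)
        = 2 * ((t * t ^ ((m:ℝ) - 2)) * ((1 + t ^ 2) ^ (a/2))⁻¹) := by ring
      _ = 2 * (t ^ ((m:ℝ) - 1) * ((1 + t ^ 2) ^ (a/2))⁻¹) := by rw [this]
  rw [setIntegral_congr_fun measurableSet_Ioi hpt, betaIoi_aux hx hy,
    show (m:ℝ)/2 + (a - (m:ℝ))/2 = a/2 by ring] at key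
  rw [MeasureTheory.integral_const_mul] at key
  have hG : Real.Gamma (a/2) ≠ 0 := (Real.Gamma_pos_of_pos (by linarith)).ne'
  field_simp at key ⊢
  linarith [key]

/-- `C_{n,s,p} · Θ_{m,n,p} = C_{n-m,s,p}` for integers `1 ≤ m < n`, `0 < s < 1`, `1 ≤ p < ∞`. -/
theorem stmt_3 (m n : ℕ) (s p : ℝ) (hm : 1 ≤ m) (hmn : m < n)
    (hs0 : 0 < s) (hs1 : s < 1) (hp : 1 ≤ p) :
    fracConst n s p * Theta m n s p = fracConst (n - m) s p := by
  have hsp : 0 < s * p := by nlinarith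
  have hmn' : (m:ℝ) < (n:ℝ) := by exact_mod_cast hmn
  have ha : (m:ℝ) < (n:ℝ) + s * p := by linarith
  have hm0 : (0:ℝ) < (m:ℝ) := by exact_mod_cast hm
  have hGm : Real.Gamma ((m:ℝ)/2) ≠ 0 := (Real.Gamma_pos_of_pos (by positivity)).ne'
  have hGa : Real.Gamma (((n:ℝ) + s*p)/2) ≠ 0 := (Real.Gamma_pos_of_pos (by positivity)).ne'
  have hG1s : Real.Gamma (1 - s) ≠ 0 := (Real.Gamma_pos_of_pos (by linarith)).ne'
  have hGp : Real.Gamma ((p + 1)/2) ≠ 0 := (Real.Gamma_pos_of_pos (by linarith)).ne'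
  have hTheta : Theta m n s p =
      π ^ ((m:ℝ)/2) * Real.Gamma (((n:ℝ) + s*p - m)/2) / Real.Gamma (((n:ℝ) + s*p)/2) := by
    rw [Theta, intIoi_aux m hm ha]
    field_simp
  rw [hTheta, fracConst, fracConst, Nat.cast_sub hmn.le]
  have hpi : π ^ (((n:ℝ)-1)/2) = π ^ ((m:ℝ)/2) * π ^ ((((n:ℝ) - m) - 1)/2) := by
    rw [← Real.rpow_add pi_pos]
    congr 1
    ring
  have hpim : (0:ℝ) < π ^ ((m:ℝ)/2) := Real.rpow_pos_of_pos pi_pos _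
  have hpinm : (0:ℝ) < π ^ ((((n:ℝ) - m) - 1)/2) := Real.rpow_pos_of_pos pi_pos _
  rw [hpi, show ((n:ℝ) - (m:ℝ) + s*p)/2 = ((n:ℝ) + s*p - m)/2 by ring]
  field_simp
end

section
/- (Discrete Picone inequality) Let p ∈ (1,∞) and let f, g : ℝⁿ → ℝ be measurable with f ≥ 0 and g > 0. Then for all x, y, L(f,g)(x,y) := |f(x)-f(y)|^p - |g(x)-g(y)|^{p-2}(g(x)-g(y))·(f(x)^p/g(x)^{p-1} - f(y)^p/g(y)^{p-1}) ≥ 0. -/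
open MeasureTheory Real Set

lemma lemA {p x y l : ℝ} (hp : 1 ≤ p) (hx : 0 ≤ x) (hy : 0 ≤ y) (hl0 : 0 < l) (hl1 : l < 1) :
    (x + y) ^ p ≤ l ^ (1 - p) * x ^ p + (1 - l) ^ (1 - p) * y ^ p := by
  have h1l : (0:ℝ) < 1 - l := by linarith
  have hu : (x / l) ∈ Ici (0:ℝ) := mem_Ici.mpr (by positivity)
  have hv : (y / (1 - l)) ∈ Ici (0:ℝ) := mem_Ici.mpr (by positivity)
  have := (convexOn_rpow hp).2 hu hv hl0.le h1l.le (by ring)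
  have e1 : l • (x / l) + (1 - l) • (y / (1 - l)) = x + y := by
    simp only [smul_eq_mul]
    field_simp
  rw [e1] at this
  calc (x + y) ^ p ≤ l • (x / l) ^ p + (1 - l) • (y / (1 - l)) ^ p := this
    _ = l ^ (1 - p) * x ^ p + (1 - l) ^ (1 - p) * y ^ p := by
        rw [smul_eq_mul, smul_eq_mul, div_rpow hx hl0.le, div_rpow hy h1l.le,
          rpow_sub hl0, rpow_sub h1l, rpow_one]
        field_simp
        rw [rpow_one]
        ring

lemma lemB {p a b t : ℝ} (hp : 1 < p) (ha : 0 ≤ a) (hb : 0 ≤ b) (ht0 : 0 < t) (ht1 : t < 1) :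
    (1 - t) ^ (p - 1) * a ^ p ≤ |a - b| ^ p + (1 - t) ^ (p - 1) * t ^ (1 - p) * b ^ p := by
  have h1t : (0:ℝ) < 1 - t := by linarith
  rcases le_or_gt a b with hab | hab
  · have h1 : (1 - t) ^ (p - 1) * a ^ p ≤ (1 - t) ^ (p - 1) * b ^ p := by
      gcongr
    have h2 : (1:ℝ) ≤ t ^ (1 - p) := by
      have h2' := rpow_le_rpow_of_exponent_ge ht0 ht1.le (show 1 - p ≤ (0:ℝ) by linarith)
      rwa [rpow_zero] at h2'
    have h3 : (1 - t) ^ (p - 1) * b ^ p ≤ (1 - t) ^ (p - 1) * t ^ (1 - p) * b ^ p := by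
      rw [mul_assoc]
      gcongr
      calc b ^ p = 1 * b ^ p := (one_mul _).symm
        _ ≤ t ^ (1 - p) * b ^ p := by gcongr
    have h4 : (0:ℝ) ≤ |a - b| ^ p := rpow_nonneg (abs_nonneg _) p
    linarith
  · have habs : |a - b| = a - b := abs_of_pos (by linarith)
    have key := lemA (p := p) (x := a - b) (y := b) hp.le (by linarith) hb h1t (by linarith)
    have e : a - b + b = a := by ring
    rw [e] at key
    have e2 : 1 - (1 - t) = t := by ring
    rw [e2] at key
    have hmul := mul_le_mul_of_nonneg_left key (le_of_lt (rpow_pos_of_pos h1t (p-1)))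
    calc (1 - t) ^ (p - 1) * a ^ p
        ≤ (1 - t) ^ (p - 1) * ((1 - t) ^ (1 - p) * (a - b) ^ p + t ^ (1 - p) * b ^ p) := hmul
      _ = |a - b| ^ p + (1 - t) ^ (p - 1) * t ^ (1 - p) * b ^ p := by
          rw [habs, mul_add, ← mul_assoc, ← mul_assoc, ← rpow_add h1t]
          norm_num

lemma lemC {p a b c d : ℝ} (hp : 1 < p) (ha : 0 ≤ a) (hb : 0 ≤ b) (hd : 0 < d) (hcd : d < c) :
    (c - d) ^ (p - 1) * (a ^ p / c ^ (p - 1) - b ^ p / d ^ (p - 1)) ≤ |a - b| ^ p := by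
  have hc : 0 < c := hd.trans hcd
  have ht0 : 0 < d / c := by positivity
  have ht1 : d / c < 1 := (div_lt_one hc).mpr hcd
  have key := lemB (t := d / c) hp ha hb ht0 ht1
  have e1 : (1 : ℝ) - d / c = (c - d) / c := by field_simp
  have hcd0 : (0:ℝ) < c - d := by linarith
  rw [e1, div_rpow hcd0.le hc.le, div_rpow hd.le hc.le] at key
  have ed : d ^ (1 - p) = (d ^ (p - 1))⁻¹ := by
    rw [show (1 - p) = -(p-1) by ring, rpow_neg hd.le]
  have ec : c ^ (1 - p) = (c ^ (p - 1))⁻¹ := by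
    rw [show (1 - p) = -(p-1) by ring, rpow_neg hc.le]
  rw [ed, ec] at key
  have hcp : 0 < c ^ (p - 1) := rpow_pos_of_pos hc _
  have hdp : 0 < d ^ (p - 1) := rpow_pos_of_pos hd _
  have e3 : (c - d) ^ (p-1) * (a ^ p / c ^ (p-1) - b ^ p / d ^ (p-1)) =
      (c - d) ^ (p-1) / c ^ (p-1) * a ^ p -
      (c - d) ^ (p-1) / c ^ (p-1) * ((d ^ (p-1))⁻¹ / (c ^ (p-1))⁻¹) * b ^ p := by
    field_simp
  rw [e3]
  linarith

/-- Discrete Picone inequality: for `p ∈ (1,∞)`, `f, g : ℝⁿ → ℝ` measurable with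
`f ≥ 0`, `g > 0`, and all `x, y`,
`|f(x)-f(y)|^p ≥ |g(x)-g(y)|^{p-2}(g(x)-g(y))·(f(x)^p/g(x)^{p-1} - f(y)^p/g(y)^{p-1})`. -/
theorem stmt_4 (n : ℕ) (p : ℝ) (hp : 1 < p)
    (f g : EuclideanSpace ℝ (Fin n) → ℝ) (hf : Measurable f) (hg : Measurable g)
    (hf0 : ∀ x, 0 ≤ f x) (hg0 : ∀ x, 0 < g x) :
    ∀ x y : EuclideanSpace ℝ (Fin n),
      0 ≤ |f x - f y| ^ p -
        |g x - g y| ^ (p - 2) * (g x - g y) *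
          (f x ^ p / g x ^ (p - 1) - f y ^ p / g y ^ (p - 1)) := by
  intro x y
  rcases lt_trichotomy (g x) (g y) with hlt | heq | hgt
  · -- g x < g y
    have key := lemC hp (hf0 y) (hf0 x) (hg0 x) hlt
    rw [abs_sub_comm (f y) (f x)] at key
    have hpos : (0:ℝ) < g y - g x := by linarith
    have e : |g x - g y| ^ (p - 2) * (g x - g y) = -((g y - g x) ^ (p - 1)) := by
      rw [abs_of_neg (by linarith : g x - g y < 0),
        show -(g x - g y) = g y - g x by ring,
        show p - 1 = p - 2 + 1 by ring, rpow_add hpos, rpow_one]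
      ring
    rw [e]
    have e2 : -((g y - g x) ^ (p - 1)) * (f x ^ p / g x ^ (p - 1) - f y ^ p / g y ^ (p - 1))
        = (g y - g x) ^ (p - 1) * (f y ^ p / g y ^ (p - 1) - f x ^ p / g x ^ (p - 1)) := by
      ring
    rw [e2]
    linarith
  · simp [sub_eq_zero.mpr heq]
    positivity
  · -- g y < g x
    have key := lemC hp (hf0 x) (hf0 y) (hg0 y) hgt
    have hpos : (0:ℝ) < g x - g y := by linarith
    have e : |g x - g y| ^ (p - 2) * (g x - g y) = (g x - g y) ^ (p - 1) := by
      rw [abs_of_pos hpos, show p - 1 = p - 2 + 1 by ring, rpow_add hpos, rpow_one]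
    rw [e]
    linarith
end

section
/- (Equality case in discrete Picone) Let p ∈ (1,∞), f, g : ℝⁿ → ℝ measurable with f ≥ 0, g > 0. Then L(f,g)(x,y) = 0 for a.e. (x,y) if and only if f = αg a.e. in ℝⁿ for some constant α ≥ 0. -/
open MeasureTheory Real

lemma picone_rpow_step {x : ℝ} (hx : x ≠ 0) (q : ℝ) : x ^ q * x = x ^ (q + 1) :=
  (Real.rpow_add_one hx q).symm

-- tangent line inequality for x ↦ x^p at a, strict
lemma picone_tangent_lt {p : ℝ} (hp : 1 < p) {a b : ℝ} (ha : 0 ≤ a) (hb : 0 ≤ b)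
    (hab : a ≠ b) : a ^ p + p * a ^ (p - 1) * (b - a) < b ^ p := by
  rcases eq_or_lt_of_le ha with rfl | ha'
  · have hb' : 0 < b := lt_of_le_of_ne hb hab
    rw [Real.zero_rpow (by positivity), Real.zero_rpow (by linarith : p - 1 ≠ 0)]
    simpa using Real.rpow_pos_of_pos hb' p
  · have hs : -1 ≤ b / a - 1 := by
      have : 0 ≤ b / a := div_nonneg hb ha'.le
      linarith
    have hs' : b / a - 1 ≠ 0 := by
      intro h
      apply hab
      field_simp at h
      linarith
    have key := one_add_mul_self_lt_rpow_one_add hs hs' hp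
    have h1 : 1 + (b / a - 1) = b / a := by ring
    rw [h1] at key
    have hap : (0:ℝ) < a ^ p := Real.rpow_pos_of_pos ha' p
    have key2 : (1 + p * (b / a - 1)) * a ^ p < (b / a) ^ p * a ^ p :=
      (mul_lt_mul_iff_left₀ hap).mpr key
    have h2 : (b / a) ^ p * a ^ p = b ^ p := by
      rw [Real.div_rpow hb ha'.le]
      field_simp
    rw [h2] at key2
    have h3 : a ^ (p - 1) * a = a ^ p := by
      rw [picone_rpow_step ha'.ne']; congr 1; ring
    calc a ^ p + p * a ^ (p - 1) * (b - a)
        = (1 + p * (b / a - 1)) * a ^ p := by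
          rw [← h3]; field_simp
      _ < b ^ p := key2

-- convexity tangent inequality for |x|^p, case B > 0
lemma picone_conv_aux {p : ℝ} (hp : 1 < p) {B : ℝ} (hB : 0 < B) (A : ℝ) :
    B ^ p + p * B ^ (p - 1) * (A - B) ≤ |A| ^ p := by
  rcases le_or_gt 0 A with hA | hA
  · rcases eq_or_ne A B with rfl | hAB
    · simp [abs_of_nonneg hA]
    · have := (picone_tangent_lt hp hB.le hA hAB.symm).le
      rwa [abs_of_nonneg hA]
  · have h1 : (0:ℝ) ≤ |A| ^ p := Real.rpow_nonneg (abs_nonneg A) p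
    have hBp : (0:ℝ) < B ^ p := Real.rpow_pos_of_pos hB p
    have hBp1 : (0:ℝ) < B ^ (p - 1) := Real.rpow_pos_of_pos hB (p-1)
    have h3 : B ^ (p - 1) * B = B ^ p := by
      rw [picone_rpow_step hB.ne']; congr 1; ring
    nlinarith [mul_pos hBp1 (neg_pos.mpr hA), mul_lt_mul_of_pos_left hp (mul_pos hBp1 hB)]

-- general convexity tangent inequality for |x|^p
lemma picone_conv {p : ℝ} (hp : 1 < p) (A B : ℝ) :
    |B| ^ p + p * (|B| ^ (p - 2) * B) * (A - B) ≤ |A| ^ p := by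
  rcases lt_trichotomy B 0 with hB | rfl | hB
  · have key := picone_conv_aux hp (neg_pos.mpr hB) (-A)
    rw [abs_neg] at key
    have he : |B| = -B := abs_of_neg hB
    have h2 : (-B) ^ (p - 2) * B = -((-B) ^ (p - 1)) := by
      have h := picone_rpow_step (x := -B) (by linarith) (p - 2)
      have he2 : p - 2 + 1 = p - 1 := by ring
      rw [he2] at h
      calc (-B) ^ (p - 2) * B = -((-B) ^ (p - 2) * (-B)) := by ring
        _ = -((-B) ^ (p - 1)) := by rw [h]
    rw [he, h2]
    have : p * (-(-B) ^ (p - 1)) * (A - B) = p * (-B) ^ (p - 1) * (-A - -B) := by ring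
    linarith [key]
  · have h0 : |(0:ℝ)| ^ p = 0 := by
      simp [Real.zero_rpow (by positivity : p ≠ 0)]
    rw [h0]
    simpa using Real.rpow_nonneg (abs_nonneg A) p
  · have key := picone_conv_aux hp hB A
    have he : |B| = B := abs_of_pos hB
    have h2 : B ^ (p - 2) * B = B ^ (p - 1) := by
      rw [picone_rpow_step hB.ne']; congr 1; ring
    rw [he, h2]
    exact key

-- scaling of φ(w) = |w|^{p-2} w
lemma picone_phi_mul {p : ℝ} (hp : 1 < p) {t : ℝ} (ht : 0 ≤ t) (w : ℝ) :
    |t * w| ^ (p - 2) * (t * w) = t ^ (p - 1) * (|w| ^ (p - 2) * w) := by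
  rcases eq_or_lt_of_le ht with rfl | ht'
  · simp [Real.zero_rpow (by linarith : p - 1 ≠ 0)]
  · rcases eq_or_ne w 0 with rfl | hw
    · simp
    · rw [abs_mul, abs_of_pos ht', Real.mul_rpow ht'.le (abs_nonneg w)]
      have h : t ^ (p - 2) * t = t ^ (p - 1) := by
        rw [picone_rpow_step ht'.ne']; congr 1; ring
      calc t ^ (p - 2) * |w| ^ (p - 2) * (t * w)
          = (t ^ (p - 2) * t) * (|w| ^ (p - 2) * w) := by ring
        _ = t ^ (p - 1) * (|w| ^ (p - 2) * w) := by rw [h]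

lemma picone_phi_sq {p : ℝ} (hp : 1 < p) (w : ℝ) :
    (|w| ^ (p - 2) * w) * w = |w| ^ p := by
  rcases eq_or_ne w 0 with rfl | hw
  · simp [Real.zero_rpow (by positivity : p ≠ 0)]
  · have hw' : (0:ℝ) < |w| := abs_pos.mpr hw
    have hsq : w * w = |w| * |w| := (abs_mul_abs_self w).symm
    have h1 : |w| ^ (p - 2) * |w| = |w| ^ (p - 1) := by
      rw [picone_rpow_step hw'.ne']; congr 1; ring
    have h2 : |w| ^ (p - 1) * |w| = |w| ^ p := by
      rw [picone_rpow_step hw'.ne']; congr 1; ring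
    calc (|w| ^ (p - 2) * w) * w = (|w| ^ (p - 2) * |w|) * |w| := by rw [mul_assoc, hsq]; ring
      _ = |w| ^ (p - 1) * |w| := by rw [h1]
      _ = |w| ^ p := h2


lemma picone_eq {p : ℝ} (hp : 1 < p) {t s u v : ℝ} (ht : 0 ≤ t) (hs : 0 ≤ s)
    (hu : 0 < u) (hv : 0 < v)
    (heq : |t * u - s * v| ^ p = |u - v| ^ (p - 2) * (u - v) * (t ^ p * u - s ^ p * v)) :
    t = s := by
  by_contra hts
  rcases lt_trichotomy u v with huv | huv | huv
  · -- u < v : use B = s*(u-v)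
    have hw : u - v ≠ 0 := by linarith
    have hΦneg : |u - v| ^ (p - 2) * (u - v) < 0 := by
      have : (0:ℝ) < |u - v| ^ (p - 2) := Real.rpow_pos_of_pos (abs_pos.mpr hw) _
      nlinarith
    have key := picone_conv hp (t * u - s * v) (s * (u - v))
    rw [picone_phi_mul hp hs (u - v)] at key
    have habs : |s * (u - v)| ^ p = s ^ p * |u - v| ^ p := by
      rw [abs_mul, abs_of_nonneg hs, Real.mul_rpow hs (abs_nonneg _)]
    rw [habs] at key
    have hphisq : |u - v| ^ p = (|u - v| ^ (p - 2) * (u - v)) * (u - v) := (picone_phi_sq hp _).symm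
    -- tangent strict: s^p + p s^{p-1}(t-s) < t^p
    have htan := picone_tangent_lt hp hs ht (Ne.symm hts)  -- hts : ¬ t = s, need s ≠ t
    -- combine
    rw [heq] at key
    set Φ := |u - v| ^ (p - 2) * (u - v) with hΦ
    -- key : s^p * |u-v|^p + p * (s^{p-1} * Φ) * (t*u - s*v - s*(u-v)) ≤ Φ * (t^p u - s^p v)
    have hexp : t * u - s * v - s * (u - v) = (t - s) * u := by ring
    rw [hexp, hphisq] at key
    -- key : s^p * (Φ*(u-v)) + p * (s^{p-1} * Φ) * ((t-s)*u) ≤ Φ * (t^p*u - s^p*v)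
    -- i.e. Φ*u*(p s^{p-1}(t-s)) ≤ Φ*u*(t^p - s^p)
    have hk2 : (Φ * u) * (p * s ^ (p-1) * (t - s)) ≤ (Φ * u) * (t ^ p - s ^ p) := by nlinarith [key]
    have hΦu : Φ * u < 0 := mul_neg_of_neg_of_pos hΦneg hu
    have := (mul_le_mul_left_of_neg hΦu).mp hk2
    -- this : t^p - s^p ≤ p s^{p-1}(t-s), contradict htan
    linarith [htan, this]
  · -- u = v
    have h0 : t * u - s * v = (t - s) * u := by rw [huv]; ring
    have : |t * u - s * v| ^ p = 0 := by
      rw [heq, huv]; simp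
    rw [h0] at this
    have hne : (t - s) * u ≠ 0 := by
      have : t - s ≠ 0 := sub_ne_zero.mpr hts
      positivity
    have : (0:ℝ) < |(t - s) * u| ^ p := Real.rpow_pos_of_pos (abs_pos.mpr hne) p
    linarith
  · -- u > v : use B = t*(u-v)
    have hw : u - v ≠ 0 := by linarith
    have hΦpos : 0 < |u - v| ^ (p - 2) * (u - v) := by
      have : (0:ℝ) < |u - v| ^ (p - 2) := Real.rpow_pos_of_pos (abs_pos.mpr hw) _
      nlinarith
    have key := picone_conv hp (t * u - s * v) (t * (u - v))
    rw [picone_phi_mul hp ht (u - v)] at key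
    have habs : |t * (u - v)| ^ p = t ^ p * |u - v| ^ p := by
      rw [abs_mul, abs_of_nonneg ht, Real.mul_rpow ht (abs_nonneg _)]
    rw [habs] at key
    have hphisq : |u - v| ^ p = (|u - v| ^ (p - 2) * (u - v)) * (u - v) := (picone_phi_sq hp _).symm
    have htan := picone_tangent_lt hp ht hs hts
    rw [heq] at key
    set Φ := |u - v| ^ (p - 2) * (u - v) with hΦ
    have hexp : t * u - s * v - t * (u - v) = (t - s) * v := by ring
    rw [hexp, hphisq] at key
    have hk2 : (Φ * v) * (p * t ^ (p-1) * (t - s)) ≤ (Φ * v) * (t ^ p - s ^ p) := by nlinarith [key]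
    have hΦv : 0 < Φ * v := mul_pos hΦpos hv
    have := (mul_le_mul_iff_right₀ hΦv).mp hk2
    linarith [htan, this]


/-- Equality case in the discrete Picone inequality: with `p ∈ (1,∞)`, `f ≥ 0`, `g > 0`
measurable, `L(f,g) = 0` a.e. on `ℝⁿ × ℝⁿ` iff `f = αg` a.e. for some constant `α ≥ 0`. -/
theorem stmt_5 (n : ℕ) (p : ℝ) (hp : 1 < p)
    (f g : EuclideanSpace ℝ (Fin n) → ℝ) (hf : Measurable f) (hg : Measurable g)
    (hf0 : ∀ x, 0 ≤ f x) (hg0 : ∀ x, 0 < g x) :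
    (∀ᵐ z : EuclideanSpace ℝ (Fin n) × EuclideanSpace ℝ (Fin n),
        |f z.1 - f z.2| ^ p -
          |g z.1 - g z.2| ^ (p - 2) * (g z.1 - g z.2) *
            (f z.1 ^ p / g z.1 ^ (p - 1) - f z.2 ^ p / g z.2 ^ (p - 1)) = 0)
      ↔ ∃ α : ℝ, 0 ≤ α ∧ f =ᵐ[volume] fun x => α * g x := by
  have hgstep : ∀ x, g x ^ (p - 1) * g x = g x ^ p := by
    intro x
    rw [picone_rpow_step (hg0 x).ne']; congr 1; ring
  have hgp1 : ∀ x, (0:ℝ) < g x ^ (p - 1) := fun x => Real.rpow_pos_of_pos (hg0 x) _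
  have hratio : ∀ x, (f x / g x) ^ p * g x = f x ^ p / g x ^ (p - 1) := by
    intro x
    rw [Real.div_rpow (hf0 x) (hg0 x).le, ← hgstep x]
    field_simp
    rw [mul_comm (g x ^ (p - 1)) (g x), ← div_div, mul_div_assoc, div_self (hg0 x).ne', mul_one]
  constructor
  · intro h
    have h2 : ∀ᵐ z : EuclideanSpace ℝ (Fin n) × EuclideanSpace ℝ (Fin n),
        f z.1 / g z.1 = f z.2 / g z.2 := by
      filter_upwards [h] with z hz
      apply picone_eq hp (div_nonneg (hf0 z.1) (hg0 z.1).le)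
        (div_nonneg (hf0 z.2) (hg0 z.2).le) (hg0 z.1) (hg0 z.2)
      rw [div_mul_cancel₀ _ (hg0 z.1).ne', div_mul_cancel₀ _ (hg0 z.2).ne',
        hratio z.1, hratio z.2]
      linarith [hz]
    rw [Measure.volume_eq_prod] at h2
    have h3 := Measure.ae_ae_of_ae_prod h2
    have hvol : (volume : Measure (EuclideanSpace ℝ (Fin n))) ≠ 0 := by
      intro h0
      have := isOpen_univ.measure_pos (volume : Measure (EuclideanSpace ℝ (Fin n)))
        ⟨0, trivial⟩
      rw [h0] at this
      simp at this
    haveI : (ae (volume : Measure (EuclideanSpace ℝ (Fin n)))).NeBot := ae_neBot.mpr hvol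
    obtain ⟨x₀, hx₀⟩ := h3.exists
    refine ⟨f x₀ / g x₀, div_nonneg (hf0 x₀) (hg0 x₀).le, ?_⟩
    filter_upwards [hx₀] with y hy
    rw [hy, div_mul_cancel₀ _ (hg0 y).ne']
  · rintro ⟨α, hα, hfg⟩
    have hfg' : ∀ᵐ x : EuclideanSpace ℝ (Fin n), f x = α * g x := hfg
    rw [Measure.volume_eq_prod]
    have h1 : ∀ᵐ z : EuclideanSpace ℝ (Fin n) × EuclideanSpace ℝ (Fin n)
        ∂((volume : Measure (EuclideanSpace ℝ (Fin n))).prod volume), f z.1 = α * g z.1 :=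
      Measure.quasiMeasurePreserving_fst.ae hfg'
    have h2 : ∀ᵐ z : EuclideanSpace ℝ (Fin n) × EuclideanSpace ℝ (Fin n)
        ∂((volume : Measure (EuclideanSpace ℝ (Fin n))).prod volume), f z.2 = α * g z.2 :=
      Measure.quasiMeasurePreserving_snd.ae hfg'
    filter_upwards [h1, h2] with z e1 e2
    have egx : (α * g z.1) ^ p / g z.1 ^ (p - 1) = α ^ p * g z.1 := by
      rw [Real.mul_rpow hα (hg0 z.1).le, ← hgstep z.1, mul_comm (g z.1 ^ (p - 1)) (g z.1),
        ← mul_assoc, mul_div_assoc, div_self (hgp1 z.1).ne', mul_one]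
    have egy : (α * g z.2) ^ p / g z.2 ^ (p - 1) = α ^ p * g z.2 := by
      rw [Real.mul_rpow hα (hg0 z.2).le, ← hgstep z.2, mul_comm (g z.2 ^ (p - 1)) (g z.2),
        ← mul_assoc, mul_div_assoc, div_self (hgp1 z.2).ne', mul_one]
    have habs : |α * g z.1 - α * g z.2| ^ p = α ^ p * |g z.1 - g z.2| ^ p := by
      rw [show α * g z.1 - α * g z.2 = α * (g z.1 - g z.2) by ring, abs_mul,
        abs_of_nonneg hα, Real.mul_rpow hα (abs_nonneg _)]
    rw [e1, e2, egx, egy, habs]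
    linear_combination (α ^ p) * (picone_phi_sq hp (g z.1 - g z.2)).symm
end

section
/- For a ≥ 0, b ≥ 0 and q ≥ 1, one has (a+b)^q ≤ a^q + q·2^{q-1}·(a^{q-1}b + b^q). -/
/-- For `a, b ≥ 0` and `q ≥ 1`: `(a+b)^q ≤ a^q + q·2^{q-1}·(a^{q-1}b + b^q)`. -/
theorem stmt_15 (a b q : ℝ) (ha : 0 ≤ a) (hb : 0 ≤ b) (hq : 1 ≤ q) :
    (a + b) ^ q ≤ a ^ q + q * 2 ^ (q - 1) * (a ^ (q - 1) * b + b ^ q) := by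
  have hq0 : (0:ℝ) < q := lt_of_lt_of_le one_pos hq
  have hq1 : (0:ℝ) ≤ q - 1 := by linarith
  rcases eq_or_lt_of_le (by positivity : (0:ℝ) ≤ a + b) with h | hab
  · have ha0 : a = 0 := by linarith
    have hb0 : b = 0 := by linarith
    simp [ha0, hb0, Real.zero_rpow (ne_of_gt hq0)]
  -- step 1: (a+b)^q ≤ a^q + q * (a+b)^(q-1) * b
  have key : (a + b) ^ q ≤ a ^ q + q * (a + b) ^ (q - 1) * b := by
    have hs : (-1:ℝ) ≤ -(b / (a + b)) := by
      rw [neg_le, neg_neg]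
      exact div_le_one_of_le₀ (by linarith) hab.le
    have hbern := one_add_mul_self_le_rpow_one_add hs hq
    have h1 : 1 + -(b / (a + b)) = a / (a + b) := by
      field_simp
      ring
    rw [h1] at hbern
    have := mul_le_mul_of_nonneg_left hbern (by positivity : (0:ℝ) ≤ (a+b)^q)
    have hda : (a + b) ^ q * (a / (a + b)) ^ q = a ^ q := by
      rw [Real.div_rpow ha hab.le, mul_div_cancel₀]
      exact ne_of_gt (Real.rpow_pos_of_pos hab q)
    rw [hda] at this
    have hdb : (a + b) ^ q * (b / (a + b)) = (a + b) ^ (q - 1) * b := by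
      rw [mul_div_assoc', mul_comm, mul_div_assoc,
        ← Real.rpow_sub_one (ne_of_gt hab)]
      ring
    nlinarith [this, hdb]
  refine key.trans ?_
  -- step 2: (a+b)^(q-1) ≤ 2^(q-1) * (a^(q-1) + b^(q-1))
  have h2 : (a + b) ^ (q - 1) ≤ 2 ^ (q - 1) * (a ^ (q - 1) + b ^ (q - 1)) := by
    have hm : a + b ≤ 2 * max a b := by
      rcases max_cases a b with ⟨h, h'⟩ | ⟨h, h'⟩ <;> rw [h] <;> linarith
    calc (a + b) ^ (q - 1) ≤ (2 * max a b) ^ (q - 1) :=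
          Real.rpow_le_rpow (by positivity) hm hq1
      _ = 2 ^ (q - 1) * (max a b) ^ (q - 1) :=
          Real.mul_rpow (by norm_num) (le_max_of_le_left ha)
      _ ≤ 2 ^ (q - 1) * (a ^ (q - 1) + b ^ (q - 1)) := by
          gcongr
          rcases max_cases a b with ⟨h, _⟩ | ⟨h, _⟩ <;> rw [h] <;>
            [nlinarith [Real.rpow_nonneg hb (q-1)]; nlinarith [Real.rpow_nonneg ha (q-1)]]
  have hbq : b ^ (q - 1) * b ≤ b ^ q := by
    rcases eq_or_lt_of_le hb with h | h
    · simp [← h, Real.zero_rpow (ne_of_gt hq0)]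
    · rw [← Real.rpow_add_one (ne_of_gt h)]
      ring_nf
      exact le_refl _
  have h2' : q * (a + b) ^ (q - 1) * b ≤ q * 2 ^ (q - 1) * (a ^ (q - 1) * b + b ^ q) := by
    have := mul_le_mul_of_nonneg_left h2 (le_of_lt hq0)
    nlinarith [mul_le_mul_of_nonneg_right this hb,
      mul_le_mul_of_nonneg_left hbq (by positivity : (0:ℝ) ≤ q * 2 ^ (q - 1))]
  linarith
end
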